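/- With $H_{m,k}(t) = \frac{1}{2^m(m+2k)!}\frac{d^{m+2k}}{dt^{m+2k}}[(t^2-1)^m(t-1)^{2k}]$ and $P_n^{(0,\beta)}$ the Jacobi polynomial, the identity $H_{m,k}(t) = 2^{2k} \cdot P_{m+2k}^{(0,-2k)}(t) \cdot (1+t)^{-2k}$ holds as an identity of rational functions (equivalently, $(1+t)^{2k} H_{m,k}(t) = 2^{2k} P_{m+2k}^{(0,-2k)}(t)$ as polynomials). -/

import Mathlib

/-- `H_{m,k}(t) = 1/(2^m (m+2k)!) · (d/dt)^{m+2k} [(t²-1)^m (t-1)^{2k}]`. -/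
noncomputable def Hpoly (m k : ℕ) (t : ℝ) : ℝ :=
  (1 / (2 ^ m * ((m + 2 * k).factorial : ℝ))) *
    iteratedDeriv (m + 2 * k) (fun s : ℝ => (s ^ 2 - 1) ^ m * (s - 1) ^ (2 * k)) t

/-- The Jacobi polynomial `P_n^{(0,β)}` via the Rodrigues formula. -/
noncomputable def Pjac (n : ℕ) (β : ℤ) (t : ℝ) : ℝ :=
  ((-1 : ℝ) ^ n / (2 ^ n * (n.factorial : ℝ))) * (1 + t) ^ (-β) *
    iteratedDeriv n (fun s : ℝ => (1 + s) ^ β * (1 - s ^ 2) ^ n) t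

private lemma iterDeriv_cmul {n : ℕ} (c : ℝ) {f : ℝ → ℝ} (h : ContDiff ℝ n f) (x : ℝ) :
    iteratedDeriv n (fun s => c * f s) x = c * iteratedDeriv n f x := by
  have hf : (fun s => c * f s) = c • f := by funext s; simp [smul_eq_mul]
  rw [hf, iteratedDeriv_eq_iteratedFDeriv, iteratedDeriv_eq_iteratedFDeriv,
    iteratedFDeriv_const_smul_apply h.contDiffAt]
  simp

/-- `(1+t)^{2k} H_{m,k}(t) = 2^{2k} P_{m+2k}^{(0,-2k)}(t)` (as rational functions,
i.e. away from `t = -1`). -/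
theorem stmt5 (m k : ℕ) (t : ℝ) (ht : t ≠ -1) :
    (1 + t) ^ (2 * k) * Hpoly m k t = 2 ^ (2 * k) * Pjac (m + 2 * k) (-(2 * k : ℤ)) t := by
  set n := m + 2 * k with hn
  have hcd : ContDiff ℝ n (fun s : ℝ => (s ^ 2 - 1) ^ m * (s - 1) ^ (2 * k)) :=
    (((contDiff_id.pow 2).sub contDiff_const).pow m).mul
      ((contDiff_id.sub contDiff_const).pow (2 * k))
  have hcast : (2 * (k : ℤ)) = ((2 * k : ℕ) : ℤ) := by push_cast; ring
  have hev : (fun s : ℝ => (1 + s) ^ (-(2 * k : ℤ)) * (1 - s ^ 2) ^ n)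
      =ᶠ[nhds t] (fun s : ℝ => ((-1 : ℝ) ^ m) * ((s ^ 2 - 1) ^ m * (s - 1) ^ (2 * k))) := by
    have hopen : IsOpen {s : ℝ | s ≠ -1} := isOpen_ne
    filter_upwards [hopen.mem_nhds ht] with s hs
    have h1 : (1 : ℝ) + s ≠ 0 := by intro h; apply hs; linarith
    have key : (1 - s ^ 2) ^ n = (1 + s) ^ (2 * k) * ((1 - s ^ 2) ^ m * (1 - s) ^ (2 * k)) := by
      have h : (1 - s ^ 2 : ℝ) = (1 + s) * (1 - s) := by ring
      rw [hn, h, mul_pow, pow_add, mul_pow]; ring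
    rw [zpow_neg, hcast, zpow_natCast, key]
    have h2 : ((1 : ℝ) - s ^ 2) ^ m = (-1 : ℝ) ^ m * (s ^ 2 - 1) ^ m := by
      rw [show (1 : ℝ) - s ^ 2 = -1 * (s ^ 2 - 1) by ring, mul_pow]
    have h3 : ((1 : ℝ) - s) ^ (2 * k) = (s - 1) ^ (2 * k) := by
      rw [show (1 : ℝ) - s = -(s - 1) by ring, neg_pow, pow_mul, neg_one_sq, one_pow, one_mul]
    field_simp
    rw [h2, h3]
  have hiter : iteratedDeriv n (fun s : ℝ => (1 + s) ^ (-(2 * k : ℤ)) * (1 - s ^ 2) ^ n) t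
      = (-1 : ℝ) ^ m * iteratedDeriv n (fun s : ℝ => (s ^ 2 - 1) ^ m * (s - 1) ^ (2 * k)) t := by
    rw [hev.iteratedDeriv_eq, iterDeriv_cmul _ hcd]
  rw [Hpoly, Pjac, hiter]
  have hβ : ((1 + t) ^ (-(-(2 * (k : ℤ)))) : ℝ) = (1 + t) ^ (2 * k) := by
    rw [neg_neg, hcast, zpow_natCast]
  rw [hβ]
  set D := iteratedDeriv n (fun s : ℝ => (s ^ 2 - 1) ^ m * (s - 1) ^ (2 * k)) t with hD
  have hfac : ((n.factorial : ℝ)) ≠ 0 := Nat.cast_ne_zero.mpr n.factorial_ne_zero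
  have hsign : ((-1 : ℝ)) ^ n * (-1 : ℝ) ^ m = 1 := by
    rw [← pow_add, hn, show m + 2 * k + m = 2 * (m + k) by ring, pow_mul, neg_one_sq, one_pow]
  have h2n : (2 : ℝ) ^ n = 2 ^ m * 2 ^ (2 * k) := by rw [hn, pow_add]
  rw [h2n]
  field_simp
  have hsign' : ((-1 : ℝ)) ^ (2 * k) * (-1) ^ (2 * m) = 1 := by
    rw [pow_mul, pow_mul, neg_one_sq, one_pow, one_pow, one_mul]
  linear_combination (-(D * (n.factorial : ℝ) * (1 + t) ^ (2 * k))) * hsign'
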